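/- Let (E_n) with 0 < E_1 < E_2 < ⋯, E_n → ∞, and c_n > 0 with Σ c_n E_n/(E_n²+1) < ∞. Define F(z) = Σ_n c_n (1/(E_n − z) − E_n/(E_n²+1)) for z ∉ {E_n}. Then on each open interval (E_j, E_{j+1}), F is strictly increasing, continuous, and takes every real value exactly once. -/

import Mathlib

open Filter Topology

private lemma gap_term_bound (E c : ℕ → ℝ) (hEpos : ∀ n, 0 < E n) (hEmono : StrictMono E)
    (hc : ∀ n, 0 < c n)
    (hsum : Summable (fun n => c n * E n / (E n ^ 2 + 1)))
    (j : ℕ) (a b : ℝ) (ha : E j < a) (hb : b < E (j + 1)) (hab : a ≤ b) :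
    ∃ u : ℕ → ℝ, Summable u ∧ ∀ n, ∀ x ∈ Set.Icc a b,
      |c n * (1 / (E n - x) - E n / (E n ^ 2 + 1))| ≤ u n := by
  have hApos : 0 < E j := hEpos j
  set δ := min (a - E j) (E (j + 1) - b) with hδdef
  have hδ : 0 < δ := lt_min (by linarith) (by linarith)
  have key : ∀ n, c n / (E n ^ 2 + 1) ≤ (E 0)⁻¹ * (c n * E n / (E n ^ 2 + 1)) := by
    intro n
    have h0 : 0 < E 0 := hEpos 0
    have hE : E 0 ≤ E n := hEmono.monotone (Nat.zero_le n)
    rw [inv_mul_eq_div, le_div_iff₀ h0, div_mul_eq_mul_div,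
      div_le_div_iff₀ (by positivity) (by positivity)]
    nlinarith [mul_nonneg (mul_nonneg (hc n).le (sub_nonneg.mpr hE)) (sq_nonneg (E n)),
      mul_nonneg (hc n).le (sub_nonneg.mpr hE)]
  have hsum' : Summable (fun n => c n / (E n ^ 2 + 1)) :=
    Summable.of_nonneg_of_le (fun n => div_nonneg (hc n).le (by positivity)) key (hsum.mul_left _)
  refine ⟨fun n => c n * ((1 + b * E n) / (δ * (E n ^ 2 + 1))), ?_, ?_⟩
  · have heq : (fun n => c n * ((1 + b * E n) / (δ * (E n ^ 2 + 1))))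
        = fun n => (c n / (E n ^ 2 + 1)) / δ + b * ((c n * E n / (E n ^ 2 + 1)) / δ) := by
      funext n
      have hD : (0:ℝ) < E n ^ 2 + 1 := by positivity
      field_simp
    rw [heq]
    exact (hsum'.div_const δ).add (((hsum.div_const δ).mul_left b))
  · intro n x hx
    obtain ⟨hax, hxb⟩ := hx
    have hD : (0:ℝ) < E n ^ 2 + 1 := by positivity
    have hdist : δ ≤ |E n - x| := by
      rcases le_or_gt n j with h | h
      · have h1 : E n ≤ E j := hEmono.monotone h
        rw [abs_sub_comm, abs_of_pos (by linarith)]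
        calc δ ≤ a - E j := min_le_left _ _
          _ ≤ x - E n := by linarith
      · have h1 : E (j + 1) ≤ E n := hEmono.monotone h
        rw [abs_of_pos (by linarith)]
        calc δ ≤ E (j + 1) - b := min_le_right _ _
          _ ≤ E n - x := by linarith
    have hxne : E n - x ≠ 0 := by
      intro h; rw [h, abs_zero] at hdist; linarith
    have hid : 1 / (E n - x) - E n / (E n ^ 2 + 1)
        = (1 + x * E n) / ((E n - x) * (E n ^ 2 + 1)) := by
      field_simp
      ring
    have hnum : |1 + x * E n| = 1 + x * E n :=
      abs_of_pos (by nlinarith [hEpos n])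
    rw [hid, abs_mul, abs_div, abs_mul, abs_of_pos (hc n), abs_of_pos hD, hnum]
    refine mul_le_mul_of_nonneg_left ?_ (hc n).le
    refine div_le_div₀ (by nlinarith [hEpos n]) (by nlinarith [hEpos n]) (by positivity)
      (mul_le_mul_of_nonneg_right hdist hD.le)

/-- On each spectral gap `(E_j, E_{j+1})`, `F` is strictly increasing,
continuous, and takes every real value exactly once. -/
theorem F_strictMono_continuous_bijective_on_gaps
    (E c : ℕ → ℝ) (hEpos : ∀ n, 0 < E n) (hEmono : StrictMono E)
    (hEtop : Tendsto E atTop atTop)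
    (hc : ∀ n, 0 < c n)
    (hsum : Summable (fun n => c n * E n / (E n ^ 2 + 1)))
    (F : ℝ → ℝ)
    (hF : ∀ z, z ∉ Set.range E →
      F z = ∑' n, c n * (1 / (E n - z) - E n / (E n ^ 2 + 1))) :
    ∀ j : ℕ,
      StrictMonoOn F (Set.Ioo (E j) (E (j + 1))) ∧
      ContinuousOn F (Set.Ioo (E j) (E (j + 1))) ∧
      ∀ α : ℝ, ∃! z : ℝ, z ∈ Set.Ioo (E j) (E (j + 1)) ∧ F z = α := by
  intro j
  classical
  have hAB : E j < E (j + 1) := hEmono (Nat.lt_succ_self j)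
  have hApos : 0 < E j := hEpos j
  have hne : ∀ x ∈ Set.Ioo (E j) (E (j + 1)), ∀ n, E n ≠ x := by
    rintro x ⟨hx1, hx2⟩ n rfl
    have hj : j < n := hEmono.lt_iff_lt.mp hx1
    have h2 : E (j + 1) ≤ E n := hEmono.monotone hj
    linarith
  have hFeq : ∀ x ∈ Set.Ioo (E j) (E (j + 1)),
      F x = ∑' n, c n * (1 / (E n - x) - E n / (E n ^ 2 + 1)) := by
    intro x hx
    exact hF x (by rintro ⟨n, hn⟩; exact hne x hx n hn)
  have hsummable : ∀ x ∈ Set.Ioo (E j) (E (j + 1)),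
      Summable (fun n => c n * (1 / (E n - x) - E n / (E n ^ 2 + 1))) := by
    intro x hx
    obtain ⟨u, hu, hb⟩ := gap_term_bound E c hEpos hEmono hc hsum j x x hx.1 hx.2 le_rfl
    exact Summable.of_norm_bounded hu
      (fun n => by rw [Real.norm_eq_abs]; exact hb n x ⟨le_rfl, le_rfl⟩)
  -- termwise strict monotonicity
  have hterm : ∀ n, ∀ x ∈ Set.Ioo (E j) (E (j + 1)), ∀ y ∈ Set.Ioo (E j) (E (j + 1)),
      x < y → 1 / (E n - x) < 1 / (E n - y) := by
    intro n x hx y hy hxy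
    rcases le_or_gt n j with h | h
    · have h1 : E n ≤ E j := hEmono.monotone h
      exact one_div_lt_one_div_of_neg_of_lt (by linarith [hx.1]) (by linarith)
    · have h1 : E (j + 1) ≤ E n := hEmono.monotone h
      exact one_div_lt_one_div_of_lt (by linarith [hy.2]) (by linarith)
  have htermc : ∀ n, ∀ x ∈ Set.Ioo (E j) (E (j + 1)), ∀ y ∈ Set.Ioo (E j) (E (j + 1)),
      x < y → c n * (1 / (E n - x) - E n / (E n ^ 2 + 1))
        < c n * (1 / (E n - y) - E n / (E n ^ 2 + 1)) := by
    intro n x hx y hy hxy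
    have := hterm n x hx y hy hxy
    nlinarith [hc n]
  have hmonoF : StrictMonoOn F (Set.Ioo (E j) (E (j + 1))) := by
    intro x hx y hy hxy
    rw [hFeq x hx, hFeq y hy]
    exact Summable.tsum_lt_tsum (fun n => (htermc n x hx y hy hxy).le) (htermc 0 x hx y hy hxy)
      (hsummable x hx) (hsummable y hy)
  have hcont : ContinuousOn F (Set.Ioo (E j) (E (j + 1))) := by
    intro x hx
    obtain ⟨hx1, hx2⟩ := hx
    have ha : E j < (E j + x) / 2 := by linarith
    have hax : (E j + x) / 2 < x := by linarith
    have hxb : x < (x + E (j + 1)) / 2 := by linarith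
    have hbB : (x + E (j + 1)) / 2 < E (j + 1) := by linarith
    obtain ⟨u, hu, hb⟩ := gap_term_bound E c hEpos hEmono hc hsum j _ _ ha hbB (by linarith)
    have hsub : Set.Icc ((E j + x) / 2) ((x + E (j + 1)) / 2) ⊆ Set.Ioo (E j) (E (j + 1)) :=
      fun t ht => ⟨lt_of_lt_of_le ha ht.1, lt_of_le_of_lt ht.2 hbB⟩
    have hg : ContinuousOn (fun t => ∑' n, c n * (1 / (E n - t) - E n / (E n ^ 2 + 1)))
        (Set.Icc ((E j + x) / 2) ((x + E (j + 1)) / 2)) := by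
      refine continuousOn_tsum (fun n => ?_) hu
        (fun n t ht => by rw [Real.norm_eq_abs]; exact hb n t ht)
      have h0 : ∀ t ∈ Set.Icc ((E j + x) / 2) ((x + E (j + 1)) / 2), E n - t ≠ 0 :=
        fun t ht => sub_ne_zero.mpr (hne t (hsub ht) n)
      exact continuousOn_const.mul
        (((continuousOn_const.div (continuousOn_const.sub continuousOn_id) h0).sub
          continuousOn_const))
    have hFg : ContinuousOn F (Set.Icc ((E j + x) / 2) ((x + E (j + 1)) / 2)) :=
      hg.congr (fun t ht => hFeq t (hsub ht))
    exact (hFg.continuousAt (Icc_mem_nhds hax hxb)).continuousWithinAt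
  refine ⟨hmonoF, hcont, ?_⟩
  -- midpoint and tail sums
  set m := (E j + E (j + 1)) / 2 with hmdef
  have hm : m ∈ Set.Ioo (E j) (E (j + 1)) := ⟨by rw [hmdef]; linarith, by rw [hmdef]; linarith⟩
  have hsm := hsummable m hm
  set S := ∑' n, c n * (1 / (E n - m) - E n / (E n ^ 2 + 1)) with hSdef
  -- generic one-sided comparison
  have hcmp : ∀ k : ℕ, ∀ z ∈ Set.Ioo (E j) (E (j + 1)),
      (∀ n ≠ k, c n * (1 / (E n - z) - E n / (E n ^ 2 + 1))
          ≤ c n * (1 / (E n - m) - E n / (E n ^ 2 + 1))) →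
      F z ≤ c k * (1 / (E k - z) - E k / (E k ^ 2 + 1))
        + (S - c k * (1 / (E k - m) - E k / (E k ^ 2 + 1))) := by
    intro k z hz hle
    have hsz := hsummable z hz
    set g : ℕ → ℝ := Function.update
      (fun n => c n * (1 / (E n - m) - E n / (E n ^ 2 + 1))) k
      (c k * (1 / (E k - z) - E k / (E k ^ 2 + 1))) with hgdef
    have hgs : Summable g := hsm.update k _
    have h1 : F z ≤ ∑' n, g n := by
      rw [hFeq z hz]
      refine Summable.tsum_le_tsum (fun n => ?_) hsz hgs
      rcases eq_or_ne n k with rfl | hnk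
      · simp [hgdef]
      · rw [hgdef, Function.update_of_ne hnk]
        exact hle n hnk
    have h2 : ∑' n, g n = g k + ∑' n, if n = k then 0 else g n := Summable.tsum_eq_add_tsum_ite hgs k
    have h3 : S = c k * (1 / (E k - m) - E k / (E k ^ 2 + 1))
        + ∑' n, if n = k then 0 else c n * (1 / (E n - m) - E n / (E n ^ 2 + 1)) := by
      rw [hSdef]; exact Summable.tsum_eq_add_tsum_ite hsm k
    have h4 : (∑' n, if n = k then 0 else g n)
        = ∑' n, if n = k then 0 else c n * (1 / (E n - m) - E n / (E n ^ 2 + 1)) := by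
      refine tsum_congr fun n => ?_
      rcases eq_or_ne n k with rfl | hnk
      · simp
      · simp [hgdef, Function.update_of_ne hnk, hnk]
    have h5 : g k = c k * (1 / (E k - z) - E k / (E k ^ 2 + 1)) := by
      simp [hgdef]
    rw [h2, h4, h5] at h1
    linarith
  have hcmp' : ∀ k : ℕ, ∀ z ∈ Set.Ioo (E j) (E (j + 1)),
      (∀ n ≠ k, c n * (1 / (E n - m) - E n / (E n ^ 2 + 1))
          ≤ c n * (1 / (E n - z) - E n / (E n ^ 2 + 1))) →
      c k * (1 / (E k - z) - E k / (E k ^ 2 + 1))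
        + (S - c k * (1 / (E k - m) - E k / (E k ^ 2 + 1))) ≤ F z := by
    intro k z hz hle
    have hsz := hsummable z hz
    set g : ℕ → ℝ := Function.update
      (fun n => c n * (1 / (E n - m) - E n / (E n ^ 2 + 1))) k
      (c k * (1 / (E k - z) - E k / (E k ^ 2 + 1))) with hgdef
    have hgs : Summable g := hsm.update k _
    have h1 : ∑' n, g n ≤ F z := by
      rw [hFeq z hz]
      refine Summable.tsum_le_tsum (fun n => ?_) hgs hsz
      rcases eq_or_ne n k with rfl | hnk
      · simp [hgdef]
      · rw [hgdef, Function.update_of_ne hnk]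
        exact hle n hnk
    have h2 : ∑' n, g n = g k + ∑' n, if n = k then 0 else g n := Summable.tsum_eq_add_tsum_ite hgs k
    have h3 : S = c k * (1 / (E k - m) - E k / (E k ^ 2 + 1))
        + ∑' n, if n = k then 0 else c n * (1 / (E n - m) - E n / (E n ^ 2 + 1)) := by
      rw [hSdef]; exact Summable.tsum_eq_add_tsum_ite hsm k
    have h4 : (∑' n, if n = k then 0 else g n)
        = ∑' n, if n = k then 0 else c n * (1 / (E n - m) - E n / (E n ^ 2 + 1)) := by
      refine tsum_congr fun n => ?_
      rcases eq_or_ne n k with rfl | hnk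
      · simp
      · simp [hgdef, Function.update_of_ne hnk, hnk]
    have h5 : g k = c k * (1 / (E k - z) - E k / (E k ^ 2 + 1)) := by
      simp [hgdef]
    rw [h2, h4, h5] at h1
    linarith
  intro α
  have hlow : ∃ x ∈ Set.Ioo (E j) (E (j + 1)), x < m ∧ F x < α := by
    set D := S - c j * (1 / (E j - m) - E j / (E j ^ 2 + 1))
      - c j * (E j / (E j ^ 2 + 1)) with hDdef
    set M := max (D - α) 0 + 1 with hMdef
    have hM0 : 0 < M := by
      have := le_max_right (D - α) (0:ℝ); rw [hMdef]; linarith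
    set ε := min ((m - E j) / 2) (c j / M) with hεdef
    have hmE : E j < m := hm.1
    have hε0 : 0 < ε := lt_min (by linarith) (div_pos (hc j) hM0)
    have hε1 : ε ≤ (m - E j) / 2 := min_le_left _ _
    have hε2 : ε ≤ c j / M := min_le_right _ _
    have hzm : E j + ε < m := by linarith
    have hzI : E j + ε ∈ Set.Ioo (E j) (E (j + 1)) := ⟨by linarith, by linarith [hm.2]⟩
    refine ⟨E j + ε, hzI, hzm, ?_⟩
    have hb := hcmp j (E j + ε) hzI ?_
    · have hval : c j * (1 / (E j - (E j + ε)) - E j / (E j ^ 2 + 1))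
          = -(c j / ε) - c j * (E j / (E j ^ 2 + 1)) := by
        rw [show E j - (E j + ε) = -ε by ring, div_neg]
        ring
      have h3 : M ≤ c j / ε := by
        rw [le_div_iff₀ hε0]
        calc M * ε ≤ M * (c j / M) := by nlinarith
          _ = c j := by field_simp
      have h5 : D - α < M := by
        have := le_max_left (D - α) (0:ℝ); rw [hMdef]; linarith
      rw [hval] at hb
      have h6 : F (E j + ε) ≤ -(c j / ε) + D := by rw [hDdef]; linarith
      clear_value D M ε
      linarith [h6, h3, h5]
    · intro n hnj
      have h := hterm n (E j + ε) hzI m hm hzm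
      nlinarith [hc n]
  have hupp : ∃ y ∈ Set.Ioo (E j) (E (j + 1)), m < y ∧ α < F y := by
    set D := S - c (j + 1) * (1 / (E (j + 1) - m) - E (j + 1) / (E (j + 1) ^ 2 + 1))
      - c (j + 1) * (E (j + 1) / (E (j + 1) ^ 2 + 1)) with hDdef
    set M := max (α - D) 0 + 1 with hMdef
    have hM0 : 0 < M := by
      have := le_max_right (α - D) (0:ℝ); rw [hMdef]; linarith
    set ε := min ((E (j + 1) - m) / 2) (c (j + 1) / M) with hεdef
    have hmB : m < E (j + 1) := hm.2
    have hε0 : 0 < ε := lt_min (by linarith) (div_pos (hc (j + 1)) hM0)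
    have hε1 : ε ≤ (E (j + 1) - m) / 2 := min_le_left _ _
    have hε2 : ε ≤ c (j + 1) / M := min_le_right _ _
    have hzm : m < E (j + 1) - ε := by linarith
    have hzI : E (j + 1) - ε ∈ Set.Ioo (E j) (E (j + 1)) := ⟨by linarith [hm.1], by linarith⟩
    refine ⟨E (j + 1) - ε, hzI, hzm, ?_⟩
    have hb := hcmp' (j + 1) (E (j + 1) - ε) hzI ?_
    · have hval : c (j + 1) * (1 / (E (j + 1) - (E (j + 1) - ε))
            - E (j + 1) / (E (j + 1) ^ 2 + 1))
          = c (j + 1) / ε - c (j + 1) * (E (j + 1) / (E (j + 1) ^ 2 + 1)) := by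
        rw [show E (j + 1) - (E (j + 1) - ε) = ε by ring]
        ring
      have h3 : M ≤ c (j + 1) / ε := by
        rw [le_div_iff₀ hε0]
        calc M * ε ≤ M * (c (j + 1) / M) := by nlinarith
          _ = c (j + 1) := by field_simp
      have h5 : α - D < M := by
        have := le_max_left (α - D) (0:ℝ); rw [hMdef]; linarith
      rw [hval] at hb
      have h6 : c (j + 1) / ε + D ≤ F (E (j + 1) - ε) := by rw [hDdef]; linarith
      clear_value D M ε
      linarith [h6, h3, h5]
    · intro n hnj
      have h := hterm n m hm (E (j + 1) - ε) hzI hzm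
      nlinarith [hc n]
  obtain ⟨x, hxI, hxm, hxα⟩ := hlow
  obtain ⟨y, hyI, hmy, hyα⟩ := hupp
  have hxy : x < y := lt_trans hxm hmy
  have hsubxy : Set.Icc x y ⊆ Set.Ioo (E j) (E (j + 1)) :=
    fun t ht => ⟨lt_of_lt_of_le hxI.1 ht.1, lt_of_le_of_lt ht.2 hyI.2⟩
  obtain ⟨z, hzI, hzα⟩ := intermediate_value_Icc hxy.le (hcont.mono hsubxy) ⟨hxα.le, hyα.le⟩
  refine ⟨z, ⟨hsubxy hzI, hzα⟩, ?_⟩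
  rintro w ⟨hwI, hwα⟩
  exact hmonoF.injOn hwI (hsubxy hzI) (by rw [hwα, hzα])
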